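/- arXiv:2305.10291 — 6 statements merged into one kernel-verified Lean document; each statement's English description precedes it below -/
import Mathlib

section
/- Let X be a compact metric space and f : X → X a continuous surjective map. For each t ∈ [0,1) let G_t and R_t be homeomorphisms of X onto itself, and suppose that, as t → 1 from the left, G_t converges uniformly to a continuous map G : X → X and R_t converges uniformly to a continuous map R : X → X. Assume that f maps each fiber of G into a fiber of R, i.e. for all x, y ∈ X, G(x) = G(y) implies R(f(x)) = R(f(y)). Then the maps f_t := R_t ∘ f ∘ G_t⁻¹ converge uniformly, as t → 1 from the left, to a continuous map F : X → X satisfying F ∘ G = R ∘ f. -/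
open Filter Topology

/-- Lemma on uniform convergence of conjugated maps.
Let `X` be a compact metric space and `f : X → X` a continuous surjective map.
For each `t ∈ [0,1)` let `G t` and `R t` be homeomorphisms of `X`, converging
uniformly (as `t → 1⁻`) to continuous maps `Glim` and `Rlim` respectively.
If `f` maps each fiber of `Glim` into a fiber of `Rlim`, then
`f_t := R t ∘ f ∘ (G t)⁻¹` converges uniformly, as `t → 1⁻`, to a continuous
map `F` with `F ∘ Glim = Rlim ∘ f`. -/
theorem stmt0 {X : Type*} [MetricSpace X] [CompactSpace X]
    (f : X → X) (hf : Continuous f) (hfs : Function.Surjective f)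
    (G R : ℝ → (X ≃ₜ X)) (Glim Rlim : X → X)
    (hGlim : Continuous Glim) (hRlim : Continuous Rlim)
    (hG : TendstoUniformly (fun t x => G t x) Glim (𝓝[Set.Ico (0:ℝ) 1] 1))
    (hR : TendstoUniformly (fun t x => R t x) Rlim (𝓝[Set.Ico (0:ℝ) 1] 1))
    (hfib : ∀ x y : X, Glim x = Glim y → Rlim (f x) = Rlim (f y)) :
    ∃ F : X → X, Continuous F ∧
      TendstoUniformly (fun t x => R t (f ((G t).symm x))) F (𝓝[Set.Ico (0:ℝ) 1] 1) ∧
      F ∘ Glim = Rlim ∘ f := by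
  haveI hne : (𝓝[Set.Ico (0:ℝ) 1] 1).NeBot := by
    rw [← mem_closure_iff_nhdsWithin_neBot, closure_Ico (by norm_num : (0:ℝ) ≠ 1)]
    constructor <;> norm_num
  -- Glim is surjective
  have hGsurj : Function.Surjective Glim := by
    intro z
    have hcl : IsClosed (Set.range Glim) := (isCompact_range hGlim).isClosed
    have hmem : z ∈ closure (Set.range Glim) := by
      rw [Metric.mem_closure_iff]
      intro ε hε
      have := (Metric.tendstoUniformly_iff.mp hG ε hε).exists
      obtain ⟨t, ht⟩ := this
      refine ⟨Glim ((G t).symm z), Set.mem_range_self _, ?_⟩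
      have := ht ((G t).symm z)
      rw [Homeomorph.apply_symm_apply] at this
      rw [dist_comm]
      exact this
    rw [hcl.closure_eq] at hmem
    exact hmem
  -- Glim is a quotient map
  have hq : Topology.IsQuotientMap Glim := (hGlim.isClosedMap).isQuotientMap hGlim hGsurj
  -- define F using a section of Glim
  obtain ⟨g, hg⟩ := hGsurj.hasRightInverse
  set F : X → X := fun z => Rlim (f (g z)) with hF
  have hcomp : F ∘ Glim = Rlim ∘ f := by
    funext x
    exact hfib (g (Glim x)) x (hg (Glim x))
  have hFcont : Continuous F := by
    rw [hq.continuous_iff, hcomp]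
    exact hRlim.comp hf
  refine ⟨F, hFcont, ?_, hcomp⟩
  have hFuc : UniformContinuous F := CompactSpace.uniformContinuous_of_continuous hFcont
  rw [Metric.tendstoUniformly_iff]
  intro ε hε
  obtain ⟨δ, hδ, hδF⟩ := Metric.uniformContinuous_iff.mp hFuc (ε / 2) (by linarith)
  have h1 := Metric.tendstoUniformly_iff.mp hG δ hδ
  have h2 := Metric.tendstoUniformly_iff.mp hR (ε / 2) (by linarith)
  filter_upwards [h1, h2] with t ht1 ht2 x
  set y := (G t).symm x with hy
  have hFGy : F (Glim y) = Rlim (f y) := congrFun hcomp y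
  have hxy : dist x (Glim y) < δ := by
    have := ht1 y
    rw [hy, Homeomorph.apply_symm_apply] at this
    rw [dist_comm]
    exact this
  have d1 : dist (F x) (F (Glim y)) < ε / 2 := hδF hxy
  have d2 : dist (Rlim (f y)) (R t (f y)) < ε / 2 := ht2 (f y)
  calc dist (F x) (R t (f y)) ≤ dist (F x) (F (Glim y)) + dist (F (Glim y)) (R t (f y)) :=
        dist_triangle _ _ _
    _ = dist (F x) (F (Glim y)) + dist (Rlim (f y)) (R t (f y)) := by rw [hFGy]
    _ < ε / 2 + ε / 2 := by linarith
    _ = ε := by linarith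
end

section
/- Let f₀(z) = 2 − log 2 + 2z − exp(z) and H = {z ∈ ℂ : Re z < −2}. Then for every z ∈ H one has Re(f₀(z)) < Re(z) − 1/2; consequently f₀(H) ⊆ H, for every z ∈ H and every n ∈ ℕ one has Re(f₀^[n](z)) ≤ Re(z) − n/2 (so the iterates f₀^[n] tend to ∞ uniformly on H), and H is contained in the Fatou set of f₀. -/
open Filter Topology

/-- The chordal (spherical) distance on `ℂ`. -/
noncomputable def chordalDist (a b : ℂ) : ℝ :=
  2 * ‖a - b‖ /
    (Real.sqrt (1 + ‖a‖ ^ 2) * Real.sqrt (1 + ‖b‖ ^ 2))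

/-- The Fatou set of `f`: points having a neighborhood on which the family of
iterates of `f` is uniformly equicontinuous with respect to the chordal distance. -/
def fatouSet (f : ℂ → ℂ) : Set ℂ :=
  {z | ∃ V ∈ 𝓝 z, ∀ ε : ℝ, 0 < ε → ∃ δ : ℝ, 0 < δ ∧
    ∀ x ∈ V, ∀ y ∈ V, chordalDist x y < δ →
      ∀ n : ℕ, chordalDist (f^[n] x) (f^[n] y) < ε}

/-- The Julia set of `f`. -/
def juliaSet (f : ℂ → ℂ) : Set ℂ := (fatouSet f)ᶜ

/-- A Fatou component: a connected component of the Fatou set. -/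
def IsFatouComponent (f : ℂ → ℂ) (U : Set ℂ) : Prop :=
  ∃ z ∈ fatouSet f, U = connectedComponentIn (fatouSet f) z

/-- A transcendental entire function: entire and not a polynomial. -/
def TranscendentalEntire (f : ℂ → ℂ) : Prop :=
  Differentiable ℂ f ∧ ¬ ∃ p : Polynomial ℂ, ∀ z, f z = p.eval z

/-- `U` is a `p`-periodic Baker domain of `f`: a Fatou component with
`f^[p](U) ⊆ U` on which the iterates `f^[n*p]` tend to `∞` locally uniformly. -/
def IsBakerDomain (f : ℂ → ℂ) (p : ℕ) (U : Set ℂ) : Prop :=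
  IsFatouComponent f U ∧ 1 ≤ p ∧ f^[p] '' U ⊆ U ∧
    ∀ K : Set ℂ, K ⊆ U → IsCompact K → ∀ R : ℝ, 0 < R →
      ∃ N : ℕ, ∀ n ≥ N, ∀ z ∈ K, R < ‖f^[n * p] z‖

/-- `ζ` is accessible from `U`: some curve in `U` lands at `ζ`. -/
def AccessibleFrom (U : Set ℂ) (ζ : ℂ) : Prop :=
  ∃ γ : ℝ → ℂ, ContinuousOn γ (Set.Ico 0 1) ∧ (∀ t ∈ Set.Ico (0:ℝ) 1, γ t ∈ U) ∧
    Tendsto γ (𝓝[Set.Ico (0:ℝ) 1] 1) (𝓝 ζ)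

/-- The set of critical values of `f`. -/
def criticalValues (f : ℂ → ℂ) : Set ℂ := {w | ∃ c : ℂ, deriv f c = 0 ∧ f c = w}

/-- The set of finite asymptotic values of `f`. -/
def asymptoticValues (f : ℂ → ℂ) : Set ℂ :=
  {a | ∃ γ : ℝ → ℂ, ContinuousOn γ (Set.Ici 0) ∧
    Tendsto (fun t => ‖γ t‖) atTop atTop ∧
    Tendsto (fun t => f (γ t)) atTop (𝓝 a)}

/-- `Sing(f⁻¹)`: the closure of the union of critical and finite asymptotic values. -/
def singInv (f : ℂ → ℂ) : Set ℂ := closure (criticalValues f ∪ asymptoticValues f)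

/-- The postsingular set `P(f)`. -/
def postSingular (f : ℂ → ℂ) : Set ℂ := closure (⋃ n : ℕ, f^[n] '' singInv f)

/-- `f` is semihyperbolic at `a`: there are `r > 0` and `N` such that for all `n`,
on each connected component of `(f^[n])⁻¹(D_r(a))` the map `f^[n]` is proper onto
`D_r(a)` with all fibers of cardinality at most `N`. -/
def SemihyperbolicAt (f : ℂ → ℂ) (a : ℂ) : Prop :=
  ∃ r : ℝ, 0 < r ∧ ∃ N : ℕ,
    ∀ n : ℕ, ∀ z : ℂ, f^[n] z ∈ Metric.ball a r →
      (∀ K : Set ℂ, K ⊆ Metric.ball a r → IsCompact K →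
        IsCompact (connectedComponentIn ((f^[n]) ⁻¹' Metric.ball a r) z ∩ (f^[n]) ⁻¹' K)) ∧
      (∀ w ∈ Metric.ball a r,
        (connectedComponentIn ((f^[n]) ⁻¹' Metric.ball a r) z ∩ (f^[n]) ⁻¹' {w}).Finite ∧
        (connectedComponentIn ((f^[n]) ⁻¹' Metric.ball a r) z ∩ (f^[n]) ⁻¹' {w}).ncard ≤ N)

/-- A wandering domain: a Fatou component whose forward images lie in pairwise
distinct Fatou components. -/
def IsWanderingDomain (f : ℂ → ℂ) (W : Set ℂ) : Prop :=
  IsFatouComponent f W ∧ ∀ z ∈ W, ∀ m n : ℕ, m ≠ n →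
    connectedComponentIn (fatouSet f) (f^[m] z) ≠ connectedComponentIn (fatouSet f) (f^[n] z)

/-- An arc in `U` with endpoints `a` and `b`: the image of an injective continuous
map `(0,1) → U` admitting the limits `a` and `b` at the two ends. -/
def IsArcWithEndpoints (U : Set ℂ) (lam : Set ℂ) (a b : ℂ) : Prop :=
  ∃ c : ℝ → ℂ, ContinuousOn c (Set.Ioo 0 1) ∧ Set.InjOn c (Set.Ioo 0 1) ∧
    c '' Set.Ioo 0 1 = lam ∧ lam ⊆ U ∧
    Tendsto c (𝓝[Set.Ioo (0:ℝ) 1] 0) (𝓝 a) ∧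
    Tendsto c (𝓝[Set.Ioo (0:ℝ) 1] 1) (𝓝 b)

/-- The Bergweiler function `f₀(z) = 2 - log 2 + 2z - e^z`. -/
noncomputable def f₀ : ℂ → ℂ := fun z => 2 - Real.log 2 + 2 * z - Complex.exp z

lemma hnum : Real.exp (-2) < Real.log 2 - 1/2 := by
  have h1 : (0.6931471803 : ℝ) < Real.log 2 := Real.log_two_gt_d9
  have h2 : (2.7182818283 : ℝ) < Real.exp 1 := Real.exp_one_gt_d9
  have h3 : Real.exp (-2) = 1 / (Real.exp 1 * Real.exp 1) := by
    rw [← Real.exp_add]; norm_num [Real.exp_neg]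
  rw [h3]
  rw [div_lt_iff₀ (by positivity)]
  nlinarith [Real.exp_pos 1]

lemma f0_re (z : ℂ) : (f₀ z).re = 2 - Real.log 2 + 2 * z.re - Real.exp z.re * Real.cos z.im := by
  simp [f₀, Complex.exp_re, Complex.log_re]

lemma part1 (z : ℂ) (hz : z.re < -2) : (f₀ z).re < z.re - 1 / 2 := by
  rw [f0_re]
  have hc : -1 ≤ Real.cos z.im := Real.neg_one_le_cos z.im
  have he : Real.exp z.re * (-1) ≤ Real.exp z.re * Real.cos z.im :=
    mul_le_mul_of_nonneg_left hc (Real.exp_pos _).le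
  have he2 : Real.exp z.re < Real.exp (-2) := Real.exp_lt_exp.2 hz
  nlinarith [hnum]

lemma part2 (z : ℂ) (hz : z.re < -2) : (f₀ z).re < -2 := by
  have := part1 z hz; linarith

lemma part3 (z : ℂ) (hz : z.re < -2) (n : ℕ) :
    (f₀^[n] z).re ≤ z.re - n / 2 ∧ (f₀^[n] z).re < -2 := by
  induction n with
  | zero => exact ⟨by simpa using hz.le, by simpa using hz⟩
  | succ n ih =>
    rw [Function.iterate_succ_apply']
    have h1 := part1 _ ih.2
    have h2 := part2 _ ih.2
    constructor
    · push_cast; linarith [ih.1]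
    · exact h2

lemma hderiv (z : ℂ) : HasDerivAt f₀ (2 - Complex.exp z) z := by
  have h : HasDerivAt (fun z : ℂ => 2 - (Real.log 2 : ℂ) + 2 * z - Complex.exp z)
      (0 + 2 * 1 - Complex.exp z) z :=
    ((hasDerivAt_const z _).add ((hasDerivAt_id z).const_mul 2)).sub (Complex.hasDerivAt_exp z)
  have he : (0 + 2 * 1 - Complex.exp z) = 2 - Complex.exp z := by ring
  exact he ▸ h

lemma lip (x y : ℂ) (hx : x.re < -2) (hy : y.re < -2) :
    ‖f₀ y - f₀ x‖ ≤ 3 * ‖y - x‖ := by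
  have hconv : Convex ℝ {z : ℂ | z.re < -2} := convex_halfSpace_re_lt (-2)
  have := hconv.norm_image_sub_le_of_norm_hasDerivWithin_le
    (f' := fun z => 2 - Complex.exp z)
    (fun z _ => (hderiv z).hasDerivWithinAt)
    (C := 3) ?_ hx hy
  · simpa using this
  · intro z hz
    have h1 : ‖Complex.exp z‖ = Real.exp z.re := Complex.norm_exp z
    have h2 : Real.exp z.re ≤ Real.exp (-2) := (Real.exp_lt_exp.2 hz).le
    have h3 : Real.exp (-2) ≤ 1 := Real.exp_le_one_iff.2 (by norm_num)
    calc ‖2 - Complex.exp z‖ ≤ ‖(2:ℂ)‖ + ‖Complex.exp z‖ := norm_sub_le _ _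
    _ ≤ 2 + 1 := by
        rw [show ‖Complex.exp z‖ = ‖Complex.exp z‖ from rfl, h1]
        have : ‖(2:ℂ)‖ = 2 := by norm_num
        linarith
    _ = 3 := by norm_num

lemma lipn (n : ℕ) (x y : ℂ) (hx : x.re < -2) (hy : y.re < -2) :
    ‖f₀^[n] y - f₀^[n] x‖ ≤ 3 ^ n * ‖y - x‖ := by
  induction n with
  | zero => simp
  | succ n ih =>
    rw [Function.iterate_succ_apply', Function.iterate_succ_apply']
    calc ‖f₀ (f₀^[n] y) - f₀ (f₀^[n] x)‖
        ≤ 3 * ‖f₀^[n] y - f₀^[n] x‖ :=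
          lip _ _ (part3 x hx n).2 (part3 y hy n).2
      _ ≤ 3 * (3 ^ n * ‖y - x‖) := by linarith
      _ = 3 ^ (n+1) * ‖y - x‖ := by ring


lemma one_le_S (a : ℂ) : 1 ≤ Real.sqrt (1 + ‖a‖ ^ 2) := by
  calc (1:ℝ) = Real.sqrt 1 := Real.sqrt_one.symm
    _ ≤ _ := Real.sqrt_le_sqrt (le_add_of_nonneg_right (sq_nonneg _))

lemma abs_le_S (a : ℂ) : ‖a‖ ≤ Real.sqrt (1 + ‖a‖ ^ 2) := by
  rw [show ‖a‖ = Real.sqrt (‖a‖ ^ 2) from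
    (Real.sqrt_sq (norm_nonneg a)).symm]
  exact Real.sqrt_le_sqrt (by nlinarith [Real.sq_sqrt (by positivity : (0:ℝ) ≤ ‖a‖ ^2)])

lemma S_le (a : ℂ) : Real.sqrt (1 + ‖a‖ ^ 2) ≤ 1 + ‖a‖ := by
  rw [show (1 : ℝ) + ‖a‖ = Real.sqrt ((1 + ‖a‖)^2) from
    (Real.sqrt_sq (by positivity)).symm]
  exact Real.sqrt_le_sqrt (by nlinarith [norm_nonneg a])

lemma cd_nonneg (a b : ℂ) : 0 ≤ chordalDist a b := by
  unfold chordalDist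
  apply div_nonneg
  · exact mul_nonneg (by norm_num) (norm_nonneg _)
  · exact mul_nonneg (Real.sqrt_nonneg _) (Real.sqrt_nonneg _)

lemma cd_le_two_abs (a b : ℂ) : chordalDist a b ≤ 2 * ‖a - b‖ := by
  unfold chordalDist
  have h1 := one_le_S a
  have h2 := one_le_S b
  calc 2 * ‖a - b‖ / (Real.sqrt (1 + ‖a‖ ^ 2) * Real.sqrt (1 + ‖b‖ ^ 2))
      ≤ 2 * ‖a - b‖ / 1 :=
        div_le_div_of_nonneg_left (by positivity) one_pos (by nlinarith)
    _ = 2 * ‖a - b‖ := by ring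

lemma cd_tail (a b : ℂ) (ha : 0 < ‖a‖) (hb : 0 < ‖b‖) :
    chordalDist a b ≤ 2 / ‖a‖ + 2 / ‖b‖ := by
  unfold chordalDist
  have hSa := abs_le_S a
  have hSb := abs_le_S b
  have hSa1 := one_le_S a
  have hSb1 := one_le_S b
  rw [div_le_iff₀ (by nlinarith)]
  have htri : ‖a - b‖ ≤ ‖a‖ + ‖b‖ := by
    simpa using norm_sub_le a b
  have h1 : 2 / ‖a‖ * ‖a‖ = 2 := div_mul_cancel₀ 2 ha.ne'
  have h2 : 2 / ‖b‖ * ‖b‖ = 2 := div_mul_cancel₀ 2 hb.ne'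
  have ha' : 0 < 2 / ‖a‖ := by positivity
  have hb' : 0 < 2 / ‖b‖ := by positivity
  nlinarith [mul_le_mul hSa hSb hb.le (le_trans zero_le_one hSa1)]

lemma cd_lower (x y : ℂ) :
    ‖x - y‖ ≤ (1 + ‖x‖) * (1 + ‖y‖) / 2 * chordalDist x y := by
  unfold chordalDist
  have h1 := S_le x
  have h2 := S_le y
  have h3 := one_le_S x
  have h4 := one_le_S y
  set P := (1 + ‖x‖) * (1 + ‖y‖) with hP
  have hPpos : 0 < P := by nlinarith [norm_nonneg x, norm_nonneg y]
  have hSpos : 0 < Real.sqrt (1 + ‖x‖ ^ 2) * Real.sqrt (1 + ‖y‖ ^ 2) := by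
    nlinarith
  have hSP : Real.sqrt (1 + ‖x‖ ^ 2) * Real.sqrt (1 + ‖y‖ ^ 2) ≤ P := by
    rw [hP]; exact mul_le_mul h1 h2 (Real.sqrt_nonneg _) (by nlinarith [norm_nonneg x])
  have hd : 2 * ‖x - y‖ / P ≤
      2 * ‖x - y‖ / (Real.sqrt (1 + ‖x‖ ^ 2) * Real.sqrt (1 + ‖y‖ ^ 2)) :=
    div_le_div_of_nonneg_left (mul_nonneg (by norm_num) (norm_nonneg _)) hSpos hSP
  calc ‖x - y‖ = P / 2 * (2 * ‖x - y‖ / P) := by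
        field_simp
    _ ≤ P / 2 * (2 * ‖x - y‖ / (Real.sqrt (1 + ‖x‖ ^ 2) * Real.sqrt (1 + ‖y‖ ^ 2))) :=
        mul_le_mul_of_nonneg_left hd (by positivity)


lemma abs_iter_lb (z : ℂ) (hz : z.re < -2) (n : ℕ) :
    (n : ℝ) / 2 + 2 < ‖f₀^[n] z‖ := by
  have h1 : (f₀^[n] z).re ≤ z.re - n / 2 := (part3 z hz n).1
  have h2 : -(f₀^[n] z).re ≤ ‖f₀^[n] z‖ :=
    (neg_le_abs _).trans (Complex.abs_re_le_norm _)
  linarith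

lemma part4 (R : ℝ) : ∃ N : ℕ, ∀ n ≥ N, ∀ z : ℂ, z.re < -2 → R < ‖f₀^[n] z‖ := by
  refine ⟨⌈2 * R⌉₊, fun n hn z hz => ?_⟩
  have h3 : (2 * R : ℝ) ≤ n := le_trans (Nat.le_ceil _) (by exact_mod_cast hn)
  have := abs_iter_lb z hz n
  linarith

lemma part5 : {z : ℂ | z.re < -2} ⊆ fatouSet f₀ := by
  intro z hz
  simp only [Set.mem_setOf_eq] at hz
  obtain ⟨r, hr, hrpos⟩ : ∃ r : ℝ, r = -2 - z.re ∧ 0 < r := ⟨-2 - z.re, rfl, by linarith⟩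
  refine ⟨Metric.ball z r, Metric.ball_mem_nhds z hrpos, ?_⟩
  have hV : ∀ x ∈ Metric.ball z r, x.re < -2 := by
    intro x hx
    have h1 : ‖x - z‖ < r := by
      rw [Metric.mem_ball, Complex.dist_eq] at hx; exact hx
    have h2 : x.re - z.re ≤ ‖x - z‖ := by
      have := (le_abs_self _).trans (Complex.abs_re_le_norm (x - z))
      simpa using this
    linarith
  have hVM : ∀ x ∈ Metric.ball z r, ‖x‖ < ‖z‖ + r := by
    intro x hx
    have h1 : ‖x - z‖ < r := by
      rw [Metric.mem_ball, Complex.dist_eq] at hx; exact hx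
    calc ‖x‖ = ‖z + (x - z)‖ := by congr 1; ring
      _ ≤ ‖z‖ + ‖x - z‖ := norm_add_le _ _
      _ < ‖z‖ + r := by linarith
  intro ε hε
  obtain ⟨n₀, h8⟩ : ∃ n₀ : ℕ, 8 / ε < n₀ := by
    refine ⟨⌈8 / ε⌉₊ + 1, ?_⟩
    have := Nat.le_ceil (8 / ε)
    push_cast
    linarith
  obtain ⟨M, hM, hMpos⟩ : ∃ M : ℝ, M = ‖z‖ + r ∧ 0 < M :=
    ⟨_, rfl, by have := norm_nonneg z; linarith⟩
  obtain ⟨D, hD, hDpos⟩ : ∃ D : ℝ, D = 3 ^ n₀ * (1 + M) ^ 2 ∧ 0 < D :=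
    ⟨_, rfl, by positivity⟩
  refine ⟨ε / (D + 1), by positivity, ?_⟩
  intro x hx y hy hxy n
  have hx' : x.re < -2 := hV x hx
  have hy' : y.re < -2 := hV y hy
  rcases le_or_gt n₀ n with hn | hn
  · -- tail: iterates far away
    have hAx := abs_iter_lb x hx' n
    have hAy := abs_iter_lb y hy' n
    have hn' : (n₀ : ℝ) ≤ n := by exact_mod_cast hn
    have hApos : (0:ℝ) < ‖f₀^[n] x‖ := by
      have : (0:ℝ) ≤ (n:ℝ)/2 := by positivity
      linarith
    have hBpos : (0:ℝ) < ‖f₀^[n] y‖ := by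
      have : (0:ℝ) ≤ (n:ℝ)/2 := by positivity
      linarith
    have hcd := cd_tail (f₀^[n] x) (f₀^[n] y) hApos hBpos
    have h8' : 8 < (n₀:ℝ) * ε := (div_lt_iff₀ hε).mp h8
    have hkey : ∀ A : ℝ, (n:ℝ)/2 + 2 < A → 2 / A < ε / 2 := by
      intro A hA
      have hApos' : 0 < A := by
        have : (0:ℝ) ≤ (n:ℝ)/2 := by positivity
        linarith
      rw [div_lt_div_iff₀ hApos' (by norm_num)]
      nlinarith
    have h1 := hkey _ hAx
    have h2 := hkey _ hAy
    linarith
  · -- finitely many small n: Lipschitz estimate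
    have hxM : ‖x‖ < M := hM ▸ hVM x hx
    have hyM : ‖y‖ < M := hM ▸ hVM y hy
    have hQ : (1 + ‖x‖) * (1 + ‖y‖) ≤ (1 + M) ^ 2 := by
      nlinarith [norm_nonneg x, norm_nonneg y]
    have hlow := cd_lower x y
    have hcd := cd_le_two_abs (f₀^[n] x) (f₀^[n] y)
    have hlip : ‖f₀^[n] x - f₀^[n] y‖ ≤ 3 ^ n * ‖x - y‖ := by
      have := lipn n y x hy' hx'
      simpa using this
    have hpow : (3:ℝ) ^ n ≤ 3 ^ n₀ := pow_le_pow_right₀ (by norm_num) hn.le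
    have hxy' : ‖x - y‖ ≤ (1 + M) ^ 2 / 2 * (ε / (D + 1)) := by
      have h0 := cd_nonneg x y
      calc ‖x - y‖
          ≤ (1 + ‖x‖) * (1 + ‖y‖) / 2 * chordalDist x y := hlow
        _ ≤ (1 + M) ^ 2 / 2 * (ε / (D + 1)) :=
          mul_le_mul (by linarith) hxy.le h0 (by positivity)
    have hfin : chordalDist (f₀^[n] x) (f₀^[n] y) ≤ D * (ε / (D + 1)) := by
      calc chordalDist (f₀^[n] x) (f₀^[n] y)
          ≤ 2 * ‖f₀^[n] x - f₀^[n] y‖ := hcd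
        _ ≤ 2 * (3 ^ n * ‖x - y‖) := by linarith
        _ ≤ 2 * (3 ^ n₀ * ((1 + M) ^ 2 / 2 * (ε / (D + 1)))) := by
            have habs := norm_nonneg (x - y)
            have hδ : (0:ℝ) ≤ ε / (D + 1) := by positivity
            nlinarith [pow_nonneg (by norm_num : (0:ℝ) ≤ 3) n]
        _ = D * (ε / (D + 1)) := by rw [hD]; ring
    have hlast : D * (ε / (D + 1)) < ε := by
      rw [mul_div_assoc']
      rw [div_lt_iff₀ (by linarith)]
      nlinarith
    linarith

/-- On the half-plane `H = {Re z < -2}` one has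
`Re (f₀ z) < Re z - 1/2`; hence `f₀ H ⊆ H`, the iterates satisfy
`Re (f₀^[n] z) ≤ Re z - n/2` (so `f₀^[n] → ∞` uniformly on `H`), and
`H` is contained in the Fatou set of `f₀`. -/
theorem stmt7 :
    (∀ z : ℂ, z.re < -2 → (f₀ z).re < z.re - 1 / 2) ∧
    (∀ z : ℂ, z.re < -2 → (f₀ z).re < -2) ∧
    (∀ z : ℂ, z.re < -2 → ∀ n : ℕ, (f₀^[n] z).re ≤ z.re - n / 2) ∧
    (∀ R : ℝ, ∃ N : ℕ, ∀ n ≥ N, ∀ z : ℂ, z.re < -2 → R < ‖f₀^[n] z‖) ∧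
    {z : ℂ | z.re < -2} ⊆ fatouSet f₀ := by
  exact ⟨part1, part2, fun z hz n => (part3 z hz n).1, part4, part5⟩
end

section
/- Let f₀(z) = 2 − log 2 + 2z − exp(z). Then the set of critical points {z ∈ ℂ : f₀'(z) = 0} equals {log 2 + 2πik : k ∈ ℤ}, and for every k ∈ ℤ and every n ≥ 1 one has f₀^[n](log 2 + 2πik) = log 2 + 2ⁿ·2πik. In particular, the forward orbit under f₀ of every critical value of f₀ is contained in the set {log 2 + 2πim : m ∈ ℤ}. -/
open Filter Topology

lemma exp_log2 : Complex.exp (Real.log 2 : ℂ) = 2 := by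
  rw [← Complex.ofReal_exp, Real.exp_log (by norm_num)]; norm_num

lemma deriv_f₀ (z : ℂ) : deriv f₀ z = 2 - Complex.exp z := by
  have h : HasDerivAt f₀ (0 + 2 * 1 - Complex.exp z) z := by
    exact (((hasDerivAt_const z ((2:ℂ) - Real.log 2)).add
      ((hasDerivAt_id z).const_mul 2)).sub (Complex.hasDerivAt_exp z))
  simpa using h.deriv

lemma f₀_pt (m : ℤ) :
    f₀ ((Real.log 2 : ℂ) + (2 * Real.pi : ℝ) * Complex.I * (m : ℂ)) =
      (Real.log 2 : ℂ) + (2 * Real.pi : ℝ) * Complex.I * ((2 * m : ℤ) : ℂ) := by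
  have he : Complex.exp ((Real.log 2 : ℂ) + (2 * Real.pi : ℝ) * Complex.I * (m : ℂ)) = 2 := by
    rw [Complex.exp_add, exp_log2]
    have := Complex.exp_int_mul_two_pi_mul_I m
    rw [show ((2 * Real.pi : ℝ) : ℂ) * Complex.I * (m : ℂ) = (m : ℂ) * (2 * Real.pi * Complex.I) by
      push_cast; ring, this, mul_one]
  unfold f₀
  rw [he]
  push_cast
  ring

lemma iter_pt (k : ℤ) (n : ℕ) :
    f₀^[n] ((Real.log 2 : ℂ) + (2 * Real.pi : ℝ) * Complex.I * (k : ℂ)) =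
      (Real.log 2 : ℂ) + (2 : ℂ) ^ n * ((2 * Real.pi : ℝ) * Complex.I * (k : ℂ)) := by
  induction n with
  | zero => simp
  | succ n ih =>
    rw [Function.iterate_succ_apply', ih]
    have : (Real.log 2 : ℂ) + (2 : ℂ) ^ n * ((2 * Real.pi : ℝ) * Complex.I * (k : ℂ)) =
        (Real.log 2 : ℂ) + (2 * Real.pi : ℝ) * Complex.I * (((2:ℤ) ^ n * k : ℤ) : ℂ) := by
      push_cast; ring
    rw [this, f₀_pt]
    push_cast; ring

/-- The critical points of `f₀` are exactly
`log 2 + 2πik`, `k ∈ ℤ`; one has `f₀^[n](log 2 + 2πik) = log 2 + 2ⁿ·2πik`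
for `n ≥ 1`; in particular the forward orbit of every critical value of `f₀`
stays in `{log 2 + 2πim : m ∈ ℤ}`. -/
theorem stmt8 :
    ({z : ℂ | deriv f₀ z = 0} =
      {z : ℂ | ∃ k : ℤ, z = (Real.log 2 : ℂ) + (2 * Real.pi : ℝ) * Complex.I * (k : ℂ)}) ∧
    (∀ k : ℤ, ∀ n : ℕ, 1 ≤ n →
      f₀^[n] ((Real.log 2 : ℂ) + (2 * Real.pi : ℝ) * Complex.I * (k : ℂ)) =
        (Real.log 2 : ℂ) + (2 : ℂ) ^ n * ((2 * Real.pi : ℝ) * Complex.I * (k : ℂ))) ∧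
    (∀ c : ℂ, deriv f₀ c = 0 → ∀ n : ℕ, ∃ m : ℤ,
      f₀^[n] (f₀ c) = (Real.log 2 : ℂ) + (2 * Real.pi : ℝ) * Complex.I * (m : ℂ)) := by
  have hcrit : ∀ c : ℂ, deriv f₀ c = 0 ↔
      ∃ k : ℤ, c = (Real.log 2 : ℂ) + (2 * Real.pi : ℝ) * Complex.I * (k : ℂ) := by
    intro c
    rw [deriv_f₀, sub_eq_zero, eq_comm, ← exp_log2, Complex.exp_eq_exp_iff_exists_int]
    constructor
    · rintro ⟨n, hn⟩; exact ⟨n, by rw [hn]; push_cast; ring⟩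
    · rintro ⟨n, hn⟩; exact ⟨n, by rw [hn]; push_cast; ring⟩
  refine ⟨Set.ext fun z => hcrit z, fun k n _ => iter_pt k n, ?_⟩
  intro c hc n
  obtain ⟨k, rfl⟩ := (hcrit c).1 hc
  refine ⟨2 ^ (n + 1) * k, ?_⟩
  rw [← Function.iterate_succ_apply, iter_pt, pow_succ]
  push_cast; ring
end

section
/- The entire function f₀(z) = 2 − log 2 + 2z − exp(z) has no finite asymptotic values: there exist no a ∈ ℂ and no continuous curve γ : [0,∞) → ℂ with |γ(t)| → ∞ and f₀(γ(t)) → a as t → ∞. -/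
open Filter Topology

private lemma aux_log3 : Tendsto (fun s : ℝ => s - Real.log (3 * s)) atTop atTop := by
  have h1 : Tendsto (fun s : ℝ => s / 2 - Real.log 3) atTop atTop :=
    tendsto_atTop_add_const_right _ _ (tendsto_id.atTop_div_const two_pos)
  refine tendsto_atTop_mono' _ ?_ h1
  filter_upwards [Real.isLittleO_log_id_atTop.def (by norm_num : (0:ℝ) < 1/2),
    eventually_ge_atTop (1:ℝ)] with s hs hs1
  have h3 : Real.log (3 * s) = Real.log 3 + Real.log s :=
    Real.log_mul (by norm_num) (by linarith)
  rw [Real.norm_eq_abs, abs_of_nonneg (Real.log_nonneg hs1)] at hs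
  simp only [id_eq, Real.norm_eq_abs, abs_of_nonneg (by linarith : (0:ℝ) ≤ s)] at hs
  linarith

private lemma aux_exp0 (C : ℝ) :
    Tendsto (fun s : ℝ => (2 * s + C) / Real.exp s) atTop (𝓝 0) := by
  have h1 : Tendsto (fun s : ℝ => s * Real.exp (-s)) atTop (𝓝 0) := by
    simpa using Real.tendsto_pow_mul_exp_neg_atTop_nhds_zero 1
  have h2 : Tendsto (fun s : ℝ => Real.exp (-s)) atTop (𝓝 0) :=
    Real.tendsto_exp_neg_atTop_nhds_zero
  have := (h1.const_mul 2).add (h2.const_mul C)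
  simp only [mul_zero, add_zero] at this
  refine this.congr fun s => ?_
  rw [div_eq_mul_inv, ← Real.exp_neg]
  ring

/-- `f₀` has no finite asymptotic values. -/
theorem stmt9 : ¬ ∃ a : ℂ, ∃ γ : ℝ → ℂ, ContinuousOn γ (Set.Ici 0) ∧
    Tendsto (fun t => ‖γ t‖) atTop atTop ∧
    Tendsto (fun t => f₀ (γ t)) atTop (𝓝 a) := by
  rintro ⟨a, γ, hγc, hginf, hga⟩
  set r : ℝ → ℝ := fun t => ‖γ t‖ with hrdef
  set x : ℝ → ℝ := fun t => (γ t).re with hxdef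
  set y : ℝ → ℝ := fun t => (γ t).im with hydef
  set h : ℝ → ℂ := fun t => Complex.exp (γ t) - 2 * γ t with hhdef
  set b : ℂ := (2 - (Real.log 2 : ℂ)) - a with hbdef
  have hh : Tendsto h atTop (𝓝 b) := by
    have he : h = fun t => (2 - (Real.log 2 : ℂ)) - f₀ (γ t) := by
      funext t; simp only [hhdef, f₀]; ring
    rw [he]; exact tendsto_const_nhds.sub hga
  set C : ℝ := ‖b‖ + 1 with hCdef
  have hCpos : 0 < C := by positivity
  have Eh : ∀ᶠ t in atTop, ‖h t‖ ≤ C := by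
    filter_upwards [hh.eventually (Metric.ball_mem_nhds b one_pos)] with t ht
    have h1 : ‖h t - b‖ < 1 := by
      rw [← Complex.dist_eq]; exact ht
    calc ‖h t‖ = ‖h t - b + b‖ := by ring_nf
      _ ≤ ‖h t - b‖ + ‖b‖ := norm_add_le _ _
      _ ≤ C := by rw [hCdef]; linarith
  have Emain : ∀ᶠ t in atTop,
      Real.log (r t) ≤ x t ∧ x t ≤ Real.log (3 * r t) ∧ 0 ≤ x t ∧
      ‖h t‖ ≤ C := by
    filter_upwards [Eh, hginf.eventually (eventually_ge_atTop (C + 1))] with t ht hrt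
    have hr1 : (1:ℝ) ≤ r t := by linarith
    have hrpos : (0:ℝ) < r t := by linarith
    have habs2 : ‖2 * γ t‖ = 2 * r t := by
      rw [norm_mul]; simp [hrdef]
    have hexpeq : ‖Complex.exp (γ t)‖ = Real.exp (x t) := Complex.norm_exp _
    have hsplit : Complex.exp (γ t) = h t + 2 * γ t := by simp [hhdef]
    have hub : Real.exp (x t) ≤ 3 * r t := by
      rw [← hexpeq] at *
      calc ‖Complex.exp (γ t)‖ = ‖h t + 2 * γ t‖ := by rw [hsplit]
        _ ≤ ‖h t‖ + ‖2 * γ t‖ := norm_add_le _ _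
        _ ≤ C + 2 * r t := by rw [habs2]; linarith
        _ ≤ 3 * r t := by linarith
    have hlb : r t ≤ Real.exp (x t) := by
      have : ‖2 * γ t‖ ≤ ‖h t‖ + ‖Complex.exp (γ t)‖ := by
        calc ‖2 * γ t‖ = ‖Complex.exp (γ t) - h t‖ := by
              rw [hsplit]; ring_nf
          _ ≤ ‖Complex.exp (γ t)‖ + ‖h t‖ := by
              simpa using norm_sub_le (Complex.exp (γ t)) (h t)
          _ = ‖h t‖ + ‖Complex.exp (γ t)‖ := by ring
      rw [habs2, hexpeq] at this
      linarith
    have hx_lb : Real.log (r t) ≤ x t := by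
      calc Real.log (r t) ≤ Real.log (Real.exp (x t)) := Real.log_le_log hrpos hlb
        _ = x t := Real.log_exp _
    refine ⟨hx_lb, ?_, le_trans (Real.log_nonneg hr1) hx_lb, ht⟩
    calc x t = Real.log (Real.exp (x t)) := (Real.log_exp _).symm
      _ ≤ Real.log (3 * r t) := Real.log_le_log (Real.exp_pos _) hub
  have hxtop : Tendsto x atTop atTop :=
    tendsto_atTop_mono' _ (Emain.mono fun t ht => ht.1) (Real.tendsto_log_atTop.comp hginf)
  -- cosine bound
  have hcos : ∀ᶠ t in atTop, |Real.cos (y t)| ≤ (2 * x t + C) / Real.exp (x t) := by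
    filter_upwards [Emain] with t ⟨_, _, hx0, hC⟩
    have hre : Real.exp (x t) * Real.cos (y t) = (h t).re + 2 * x t := by
      have := Complex.exp_re (γ t)
      have h2 : (Complex.exp (γ t)).re = (h t).re + 2 * x t := by
        simp [hhdef, Complex.sub_re, Complex.mul_re, hxdef]
      rw [← this, h2]
    have hhre : |(h t).re| ≤ C := le_trans (Complex.abs_re_le_norm _) hC
    have : Real.exp (x t) * |Real.cos (y t)| ≤ 2 * x t + C := by
      rw [← abs_of_pos (Real.exp_pos (x t)), ← abs_mul, hre]
      calc |(h t).re + 2 * x t| ≤ |(h t).re| + |2 * x t| := abs_add_le _ _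
        _ ≤ C + 2 * x t := by
            rw [abs_of_nonneg (by linarith : (0:ℝ) ≤ 2 * x t)]; linarith
        _ = 2 * x t + C := by ring
    rw [le_div_iff₀ (Real.exp_pos (x t)), mul_comm]
    exact this
  have hcoshalf : ∀ᶠ t in atTop, |Real.cos (y t)| < 1/2 := by
    have h0 : Tendsto (fun t => (2 * x t + C) / Real.exp (x t)) atTop (𝓝 0) :=
      (aux_exp0 C).comp hxtop
    filter_upwards [hcos, h0.eventually (gt_mem_nhds (by norm_num : (0:ℝ) < 1/2))]
      with t h1 h2
    exact lt_of_le_of_lt h1 h2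
  -- |y| tends to infinity
  have hytop : Tendsto (fun t => |y t|) atTop atTop := by
    refine tendsto_atTop_mono' _ ?_ (aux_log3.comp hginf)
    filter_upwards [Emain] with t ⟨hx_lb, hx_ub, hx0, _⟩
    have := Complex.norm_le_abs_re_add_abs_im (γ t)
    have hxabs : |(γ t).re| = x t := abs_of_nonneg hx0
    simp only [Function.comp_apply]
    rw [hxabs] at this
    have : r t - x t ≤ |y t| := by
      simp only [hrdef, hydef] at *; linarith
    linarith
  -- extract T₀, T₁
  obtain ⟨T', hT'⟩ := eventually_atTop.mp hcoshalf
  set T₀ : ℝ := max T' 0 with hT₀def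
  obtain ⟨T₁, hT₁big, hT₁ge⟩ :=
    ((hytop.eventually (eventually_gt_atTop (|y T₀| + 4))).and
      (eventually_ge_atTop T₀)).exists
  have hπ4 : Real.pi < 4 := by linarith [Real.pi_lt_d2]
  have hπpos := Real.pi_pos
  have hdiff : 4 < |y T₁ - y T₀| := by
    have := abs_sub_abs_le_abs_sub (y T₁) (y T₀)
    linarith
  -- IVT
  have hT₀0 : (0:ℝ) ≤ T₀ := le_max_right _ _
  have hsub : Set.uIcc T₀ T₁ ⊆ Set.Ici (0:ℝ) := by
    rw [Set.uIcc_of_le hT₁ge]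
    exact fun t ht => le_trans hT₀0 ht.1
  have hyc : ContinuousOn y (Set.uIcc T₀ T₁) :=
    (Complex.continuous_im.comp_continuousOn hγc).mono hsub
  have hivt := intermediate_value_uIcc hyc
  set m : ℝ := min (y T₀) (y T₁) with hmdef
  set M : ℝ := max (y T₀) (y T₁) with hMdef
  have hMm : Real.pi < M - m := by
    have : M - m = |y T₀ - y T₁| := max_sub_min_eq_abs' _ _
    rw [abs_sub_comm] at this
    linarith
  set k : ℤ := ⌈m / Real.pi⌉ with hkdef
  have hk1 : m ≤ k * Real.pi := by
    have := Int.le_ceil (m / Real.pi)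
    calc m = m / Real.pi * Real.pi := by field_simp
      _ ≤ k * Real.pi := by
          apply mul_le_mul_of_nonneg_right this (le_of_lt hπpos)
  have hk2 : (k:ℝ) * Real.pi ≤ M := by
    have h1 : (k:ℝ) < m / Real.pi + 1 := Int.ceil_lt_add_one _
    have h2 : (k:ℝ) * Real.pi < m + Real.pi := by
      have := mul_lt_mul_of_pos_right h1 hπpos
      rw [add_mul, div_mul_cancel₀ _ (ne_of_gt hπpos), one_mul] at this
      exact this
    linarith
  have hmem : (k:ℝ) * Real.pi ∈ Set.uIcc (y T₀) (y T₁) := by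
    rw [← Set.Icc_min_max]
    exact ⟨hk1, hk2⟩
  obtain ⟨t₂, ht₂mem, ht₂eq⟩ := hivt hmem
  have ht₂ge : T' ≤ t₂ := by
    rw [Set.uIcc_of_le hT₁ge] at ht₂mem
    exact le_trans (le_max_left _ _) ht₂mem.1
  have := hT' t₂ ht₂ge
  rw [ht₂eq, Real.abs_cos_int_mul_pi] at this
  norm_num at this
end

section
/- Let f₀(z) = 2 − log 2 + 2z − exp(z). Then there exists a real number x₀ with −1 < x₀ < −9/10 such that f₀(x₀) = x₀ and the derivative f₀'(x₀) = 2 − e^{x₀} satisfies 3/2 < f₀'(x₀) < 2 (so x₀ is a repelling fixed point of f₀); moreover f₀(x₀ + 2πik) = x₀ + 4πik for every k ∈ ℤ. -/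
open Filter Topology

lemma exp_nt_gt : (2.4594 : ℝ) < Real.exp (9/10) := by
  have h := Real.sum_le_exp_of_nonneg (by norm_num : (0:ℝ) ≤ 9/10) 8
  refine lt_of_lt_of_le ?_ h
  simp [Finset.sum_range_succ, Nat.factorial]
  norm_num

lemma exp_neg_nt_lt : Real.exp (-(9/10)) < 0.40661 := by
  rw [Real.exp_neg]
  rw [inv_lt_comm₀ (Real.exp_pos _) (by norm_num)]
  calc (0.40661:ℝ)⁻¹ < 2.4594 := by norm_num
  _ < Real.exp (9/10) := exp_nt_gt

lemma exp_neg_one_gt : (0.3678 : ℝ) < Real.exp (-1) := by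
  rw [Real.exp_neg]
  rw [lt_inv_comm₀ (by norm_num) (Real.exp_pos _)]
  calc Real.exp 1 < 2.7182818286 := Real.exp_one_lt_d9
  _ < (0.3678:ℝ)⁻¹ := by norm_num


/-- `f₀` has a repelling real fixed point `x₀ ∈ (-1, -9/10)`
with `f₀'(x₀) = 2 - e^{x₀} ∈ (3/2, 2)`, and `f₀(x₀ + 2πik) = x₀ + 4πik` for all `k ∈ ℤ`. -/
theorem stmt12 : ∃ x₀ : ℝ, -1 < x₀ ∧ x₀ < -(9 / 10) ∧
    f₀ (x₀ : ℂ) = (x₀ : ℂ) ∧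
    deriv f₀ (x₀ : ℂ) = ((2 - Real.exp x₀ : ℝ) : ℂ) ∧
    3 / 2 < 2 - Real.exp x₀ ∧ 2 - Real.exp x₀ < 2 ∧
    ∀ k : ℤ, f₀ ((x₀ : ℂ) + (2 * Real.pi : ℝ) * Complex.I * (k : ℂ)) =
      (x₀ : ℂ) + (4 * Real.pi : ℝ) * Complex.I * (k : ℂ) := by
  set g : ℝ → ℝ := fun x => 2 - Real.log 2 + x - Real.exp x with hg
  have hgc : ContinuousOn g (Set.Icc (-1) (-(9/10))) :=
    (continuous_const.add continuous_id |>.sub Real.continuous_exp).continuousOn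
  have hlog1 : Real.log 2 < 0.6931471808 := Real.log_two_lt_d9
  have hlog2 : (0.6931471803:ℝ) < Real.log 2 := Real.log_two_gt_d9
  have hga : g (-1) < 0 := by
    have := exp_neg_one_gt; simp only [hg]; nlinarith
  have hgb : 0 < g (-(9/10)) := by
    have := exp_neg_nt_lt; simp only [hg]; nlinarith
  have hsub := intermediate_value_Ioo (by norm_num : (-1:ℝ) ≤ -(9/10)) hgc
  obtain ⟨x₀, hx₀, hgx₀⟩ := hsub ⟨hga, hgb⟩
  obtain ⟨hx1, hx2⟩ := hx₀
  have hexp : Real.exp x₀ = 2 - Real.log 2 + x₀ := by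
    simp only [hg] at hgx₀; linarith
  refine ⟨x₀, hx1, hx2, ?_, ?_, ?_, ?_, ?_⟩
  · simp only [f₀]
    have : Complex.exp (x₀:ℂ) = ((Real.exp x₀ : ℝ) : ℂ) := (Complex.ofReal_exp x₀).symm
    rw [this, hexp]
    push_cast
    ring
  · have hd : ∀ w : ℂ, HasDerivAt f₀ (2 - Complex.exp w) w := by
      intro w
      have h1 : HasDerivAt (fun z : ℂ => 2 - Real.log 2 + 2 * z) 2 w := by
        simpa using ((hasDerivAt_id w).const_mul (2:ℂ)).const_add ((2:ℂ) - Real.log 2)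
      exact h1.sub (Complex.hasDerivAt_exp w)
    rw [(hd _).deriv, ← Complex.ofReal_exp]
    push_cast
    ring
  · rw [hexp]; nlinarith
  · rw [hexp]; nlinarith
  · intro k
    simp only [f₀]
    have hper : Complex.exp ((x₀:ℂ) + (2 * Real.pi : ℝ) * Complex.I * (k : ℂ))
        = Complex.exp (x₀:ℂ) := by
      rw [Complex.exp_add, mul_comm ((2 * Real.pi : ℝ) * Complex.I : ℂ) (k:ℂ)]
      have : ((k:ℂ) * ((2 * Real.pi : ℝ) * Complex.I)) = (k:ℂ) * (2 * Real.pi * Complex.I) := by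
        push_cast; ring
      rw [this, Complex.exp_int_mul_two_pi_mul_I, mul_one]
    rw [hper]
    have : Complex.exp (x₀:ℂ) = ((Real.exp x₀ : ℝ) : ℂ) := (Complex.ofReal_exp x₀).symm
    rw [this, hexp]
    push_cast
    ring
end

section
/- Let f₀(z) = 2 − log 2 + 2z − exp(z). Then the postsingular set satisfies P(f₀) ⊆ {log 2 + 2πim : m ∈ ℤ}; in particular every point of P(f₀) has real part log 2, and dist(P(f₀), H) ≥ 2 + log 2 for the half-plane H = {z ∈ ℂ : Re z < −2}, i.e. |z − w| ≥ 2 + log 2 for all z ∈ P(f₀) and all w ∈ H. -/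
open Filter Topology

set_option maxHeartbeats 1000000

lemma key (z u : ℂ) (C : ℝ) (hC : 1 ≤ C) (hu : ‖u‖ ≤ C)
    (hz : 100*(C+1)^2 ≤ ‖z‖) (he : Complex.exp z = 2*z + u) :
    1/2 ≤ |Real.sin z.im| ∧
      ‖z‖ - 2 - 2*Real.sqrt (‖z‖) ≤ |z.im| := by
  set s := ‖z‖ with hs
  set x := z.re with hx
  set y := z.im with hy
  have hsqs : Real.sqrt s * Real.sqrt s = s := Real.mul_self_sqrt (by positivity)
  have h10 : 10*(C+1) ≤ Real.sqrt s := by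
    rw [show (10*(C+1)) = Real.sqrt ((10*(C+1))^2) from
      (Real.sqrt_sq (by positivity)).symm]
    apply Real.sqrt_le_sqrt; nlinarith
  have hs1 : 1 ≤ s := by nlinarith [Real.sqrt_nonneg s]
  have hsC : C ≤ s := by nlinarith [Real.sqrt_nonneg s]
  have h2z : ‖2*z‖ = 2*s := by
    rw [norm_mul, hs]; norm_num
  have hE : Real.exp x = ‖2*z + u‖ := by
    rw [← he, Complex.norm_exp]
  have hElb : 2*s - C ≤ Real.exp x := by
    have h1 : ‖2*z‖ ≤ ‖2*z+u‖ + ‖u‖ := by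
      have := norm_add_le (2*z+u) (-u)
      simpa using this
    rw [hE]; rw [h2z] at h1; linarith
  have hEub : Real.exp x ≤ 2*s + C := by
    have h1 := norm_add_le (2*z) u
    rw [h2z] at h1; rw [hE]; linarith
  have hx0 : 0 ≤ x := by
    by_contra h
    push_neg at h
    have : Real.exp x < 1 := by
      rw [← Real.exp_zero]; exact Real.exp_lt_exp.mpr h
    nlinarith
  have hxub : x ≤ 2 + 2*Real.sqrt s := by
    have h3 : Real.exp x ≤ 3*s := by nlinarith
    have hlog : x ≤ Real.log (3*s) := by
      have := Real.log_le_log (Real.exp_pos x) h3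
      simpa using this
    have hlog3 : Real.log 3 ≤ 2 := by
      nlinarith [Real.log_le_sub_one_of_pos (by norm_num : (0:ℝ) < 3)]
    have hlogs : Real.log s ≤ 2*Real.sqrt s := by
      have h1 : Real.log (Real.sqrt s) ≤ Real.sqrt s - 1 :=
        Real.log_le_sub_one_of_pos (by nlinarith)
      have h2 : Real.log (Real.sqrt s) = Real.log s / 2 :=
        Real.log_sqrt (by positivity)
      nlinarith
    have hmul : Real.log (3*s) = Real.log 3 + Real.log s :=
      Real.log_mul (by norm_num) (by positivity)
    nlinarith
  have hyl : s - 2 - 2*Real.sqrt s ≤ |y| := by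
    have h1 := Complex.norm_le_abs_re_add_abs_im z
    rw [← hs, ← hx, ← hy, abs_of_nonneg hx0] at h1
    nlinarith
  refine ⟨?_, hyl⟩
  have him : Real.exp x * Real.sin y = 2*y + u.im := by
    have h1 := congrArg Complex.im he
    rw [Complex.exp_im] at h1
    simpa [← hx, ← hy] using h1
  have huim : |u.im| ≤ C := le_trans (Complex.abs_im_le_norm u) hu
  have hlb : 2*|y| - C ≤ |2*y + u.im| := by
    have h1 : |2*y| ≤ |2*y + u.im| + |u.im| := by
      simpa using abs_add_le (2*y + u.im) (-u.im)
    rw [abs_mul, abs_two] at h1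
    linarith
  have hEabs : Real.exp x * |Real.sin y| = |2*y + u.im| := by
    rw [← abs_of_nonneg (Real.exp_pos x).le, ← abs_mul, him]
  have hEpos := Real.exp_pos x
  have hkey : Real.exp x / 2 ≤ Real.exp x * |Real.sin y| := by
    rw [hEabs]
    have h2 : (3:ℝ)/2 * s ≤ 2*(s - 2 - 2*Real.sqrt s) - C := by nlinarith
    nlinarith
  nlinarith

lemma big_im (s B : ℝ) (hB : 4 ≤ B) (hsB : (2*B+8)^2 ≤ s) :
    B ≤ s - 2 - 2*Real.sqrt s := by
  have hq : Real.sqrt s * Real.sqrt s = s := Real.mul_self_sqrt (by nlinarith)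
  have h1 : 2*B+8 ≤ Real.sqrt s := by
    rw [show (2*B+8) = Real.sqrt ((2*B+8)^2) from (Real.sqrt_sq (by linarith)).symm]
    exact Real.sqrt_le_sqrt hsB
  nlinarith

lemma pi_mult_between (p q : ℝ) (h : 4 ≤ p ⊔ q - p ⊓ q) :
    ∃ k : ℤ, (k:ℝ) * Real.pi ∈ Set.uIcc p q := by
  have hπ := Real.pi_pos
  have hπ4 : Real.pi ≤ 4 := by linarith [Real.pi_le_four]
  refine ⟨⌈(p ⊓ q) / Real.pi⌉, ?_⟩
  have hlo : p ⊓ q ≤ (⌈(p ⊓ q)/Real.pi⌉:ℝ) * Real.pi := by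
    have h1 := Int.le_ceil ((p ⊓ q) / Real.pi)
    calc p ⊓ q = ((p ⊓ q)/Real.pi) * Real.pi := by field_simp
      _ ≤ _ := mul_le_mul_of_nonneg_right h1 hπ.le
  have hhi : (⌈(p ⊓ q)/Real.pi⌉:ℝ) * Real.pi ≤ p ⊔ q := by
    have h2 := (Int.ceil_lt_add_one ((p ⊓ q) / Real.pi)).le
    calc (⌈(p ⊓ q)/Real.pi⌉:ℝ) * Real.pi ≤ ((p ⊓ q)/Real.pi + 1) * Real.pi :=
          mul_le_mul_of_nonneg_right h2 hπ.le
      _ = p ⊓ q + Real.pi := by field_simp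
      _ ≤ p ⊔ q := by linarith
  simp only [Set.uIcc, Set.mem_Icc]
  exact ⟨hlo, hhi⟩

lemma asymp_empty : asymptoticValues f₀ = ∅ := by
  ext a
  simp only [Set.mem_empty_iff_false, iff_false]
  rintro ⟨γ, hγc, hginf, hγa⟩
  set u : ℝ → ℂ := fun t => 2 - (Real.log 2 : ℂ) - f₀ (γ t) with hu
  have hexp : ∀ t, Complex.exp (γ t) = 2 * γ t + u t := by
    intro t; simp only [hu, f₀]; ring
  set C : ℝ := ‖2 - (Real.log 2 : ℂ) - a‖ + 1 with hC
  have hC1 : 1 ≤ C := by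
    rw [hC]; linarith [norm_nonneg (2 - (Real.log 2:ℂ) - a)]
  -- eventually |u t| ≤ C
  have hul : Tendsto u atTop (𝓝 (2 - (Real.log 2 : ℂ) - a)) :=
    tendsto_const_nhds.sub hγa
  have huC : ∀ᶠ t in atTop, ‖u t‖ ≤ C := by
    have h1 : Tendsto (fun t => ‖u t‖) atTop
        (𝓝 (‖2 - (Real.log 2 : ℂ) - a‖)) :=
      (continuous_norm.tendsto _).comp hul
    exact (h1.eventually_lt_const (by linarith : ‖2 - (Real.log 2:ℂ) - a‖ < C)).mono
      fun t ht => ht.le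
  have hbig : ∀ᶠ t in atTop, 100*(C+1)^2 ≤ ‖γ t‖ := hginf.eventually_ge_atTop _
  obtain ⟨T₀, hT₀⟩ := (huC.and hbig).exists_forall_of_atTop
  set T : ℝ := max T₀ 0 with hT
  have hTfact : ∀ t ≥ T, ‖u t‖ ≤ C ∧ 100*(C+1)^2 ≤ ‖γ t‖ :=
    fun t ht => hT₀ t (le_trans (le_max_left _ _) ht)
  set y : ℝ → ℝ := fun t => (γ t).im with hy
  -- key conclusion at any t ≥ T
  have hkey : ∀ t ≥ T, 1/2 ≤ |Real.sin (y t)| ∧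
      ‖γ t‖ - 2 - 2*Real.sqrt (‖γ t‖) ≤ |y t| := by
    intro t ht
    exact key (γ t) (u t) C hC1 (hTfact t ht).1 (hTfact t ht).2 (hexp t)
  set B : ℝ := |y T| + 4 with hB
  obtain ⟨t₁, ht₁T, ht₁⟩ : ∃ t₁ ≥ T, (2*B+8)^2 ≤ ‖γ t₁‖ := by
    have := (hginf.eventually_ge_atTop ((2*B+8)^2)).and (eventually_ge_atTop T)
    obtain ⟨t₁, h1, h2⟩ := this.exists
    exact ⟨t₁, h2, h1⟩
  have hy1 : B ≤ |y t₁| := by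
    calc B ≤ ‖γ t₁‖ - 2 - 2*Real.sqrt (‖γ t₁‖) :=
            big_im _ B (by rw [hB]; linarith [abs_nonneg (y T)]) ht₁
      _ ≤ |y t₁| := (hkey t₁ ht₁T).2
  -- find a multiple of π between y T and y t₁
  have hycont : ContinuousOn y (Set.Icc T t₁) := by
    apply Complex.continuous_im.comp_continuousOn
    apply hγc.mono
    intro t ht
    exact le_trans (le_max_right _ _) ht.1
  have hgap : 4 ≤ y T ⊔ y t₁ - y T ⊓ y t₁ := by
    rw [max_sub_min_eq_abs]
    calc (4:ℝ) ≤ |y t₁| - |y T| := by rw [hB] at hy1; linarith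
      _ ≤ |y t₁ - y T| := by
          have := abs_sub_abs_le_abs_sub (y t₁) (y T)
          linarith
  obtain ⟨k, hkmem⟩ := pi_mult_between (y T) (y t₁) hgap
  have hTt₁ : T ≤ t₁ := ht₁T
  have hIcc : Set.uIcc T t₁ = Set.Icc T t₁ := Set.uIcc_of_le hTt₁
  have hivt := intermediate_value_uIcc (by rw [hIcc]; exact hycont)
  obtain ⟨t₂, ht₂mem, ht₂⟩ := hivt hkmem
  rw [hIcc] at ht₂mem
  have h1 := (hkey t₂ ht₂mem.1).1
  rw [ht₂, Real.sin_int_mul_pi] at h1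
  norm_num at h1

def Lset : Set ℂ := Complex.exp ⁻¹' {2}

lemma mem_Lset_iff (z : ℂ) :
    z ∈ Lset ↔ ∃ m : ℤ, z = (Real.log 2 : ℂ) + (2 * Real.pi : ℝ) * Complex.I * (m : ℂ) := by
  have h2 : Complex.exp ((Real.log 2 : ℝ) : ℂ) = 2 := by
    rw [← Complex.ofReal_exp, Real.exp_log (by norm_num)]
    norm_num
  constructor
  · intro hz
    have : Complex.exp z = Complex.exp ((Real.log 2 : ℝ) : ℂ) := by
      rw [h2]; exact hz
    obtain ⟨n, hn⟩ := Complex.exp_eq_exp_iff_exists_int.mp this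
    exact ⟨n, by rw [hn]; push_cast; ring⟩
  · rintro ⟨m, rfl⟩
    show Complex.exp _ = 2
    rw [Complex.exp_add, h2]
    have : ((2 * Real.pi : ℝ) : ℂ) * Complex.I * (m : ℂ) = (m : ℤ) * (2 * Real.pi * Complex.I) := by
      push_cast; ring
    rw [this, Complex.exp_int_mul_two_pi_mul_I]
    ring

lemma Lset_closed : IsClosed Lset :=
  isClosed_singleton.preimage Complex.continuous_exp

lemma f₀_maps_Lset : ∀ z ∈ Lset, f₀ z ∈ Lset := by
  intro z hz
  have hz2 : Complex.exp z = 2 := hz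
  show Complex.exp (f₀ z) = 2
  have : f₀ z = 2 * z - (Real.log 2 : ℂ) := by
    simp only [f₀, hz2]; ring
  rw [this, Complex.exp_sub, show (2:ℂ)*z = z + z by ring, Complex.exp_add, hz2]
  have hlog : Complex.exp ((Real.log 2 : ℝ) : ℂ) = 2 := by
    rw [← Complex.ofReal_exp, Real.exp_log (by norm_num)]; norm_num
  rw [hlog]
  norm_num

lemma crit_sub : criticalValues f₀ ⊆ Lset := by
  rintro w ⟨c, hdc, hfc⟩
  rw [deriv_f₀] at hdc
  have hc2 : Complex.exp c = 2 := by
    have : (2:ℂ) = Complex.exp c := by linear_combination hdc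
    exact this.symm
  rw [← hfc]
  exact f₀_maps_Lset c hc2

lemma postSingular_sub : postSingular f₀ ⊆ Lset := by
  have hsing : singInv f₀ ⊆ Lset := by
    unfold singInv
    rw [asymp_empty, Set.union_empty]
    exact closure_minimal crit_sub Lset_closed
  have hiter : ∀ n : ℕ, f₀^[n] '' singInv f₀ ⊆ Lset := by
    intro n
    induction n with
    | zero => simpa using hsing
    | succ n ih =>
      rintro _ ⟨z, hz, rfl⟩
      rw [Function.iterate_succ_apply']
      exact f₀_maps_Lset _ (ih ⟨z, hz, rfl⟩)
  unfold postSingular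
  exact closure_minimal (Set.iUnion_subset hiter) Lset_closed

/-- `P(f₀) ⊆ {log 2 + 2πim : m ∈ ℤ}`; in particular every
point of `P(f₀)` has real part `log 2`, and `P(f₀)` is at distance at least
`2 + log 2` from the half-plane `H = {Re z < -2}`. -/
theorem stmt13 :
    (postSingular f₀ ⊆
      {z : ℂ | ∃ m : ℤ, z = (Real.log 2 : ℂ) + (2 * Real.pi : ℝ) * Complex.I * (m : ℂ)}) ∧
    (∀ z ∈ postSingular f₀, z.re = Real.log 2) ∧
    (∀ z ∈ postSingular f₀, ∀ w : ℂ, w.re < -2 →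
      2 + Real.log 2 ≤ ‖z - w‖) := by
  have hre : ∀ z ∈ postSingular f₀, z.re = Real.log 2 := by
    intro z hz
    obtain ⟨m, rfl⟩ := (mem_Lset_iff z).mp (postSingular_sub hz)
    simp [Complex.add_re, Complex.mul_re, Complex.mul_im, Complex.log_re]
  refine ⟨fun z hz => (mem_Lset_iff z).mp (postSingular_sub hz), hre, ?_⟩
  intro z hz w hw
  have h1 : 2 + Real.log 2 ≤ (z - w).re := by
    rw [Complex.sub_re, hre z hz]; linarith
  exact le_trans h1 (le_trans (Complex.re_le_norm _) (le_refl _))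
end
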